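/- In the graph G(m,n), every maximal independent set of vertices corresponds to a lattice path from x_{1,1} to x_{m,n}: if W is a maximal independent set containing x_{i,j} with (i,j) ≠ (m,n), then exactly one of x_{i+1,j} or x_{i,j+1} is also in W. -/

import Mathlib

/-- The graph `G(m,n)`: vertices are pairs `(i,j)` (0-indexed, corresponding to
`x_{i+1,j+1}`), and `x_{i,j} ~ x_{k,l}` iff (`i < k` and `j > l`) or (`i > k` and `j < l`). -/
def gridGraph (m n : ℕ) : SimpleGraph (Fin m × Fin n) where
  Adj u v := (u.1 < v.1 ∧ v.2 < u.2) ∨ (v.1 < u.1 ∧ u.2 < v.2)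
  symm := ⟨fun u v h => Or.symm h⟩
  loopless := ⟨fun u h => by rcases h with ⟨h, -⟩ | ⟨h, -⟩ <;> exact absurd h (lt_irrefl _)⟩

/-- `W` is an independent set of the induced subgraph of `G` on `A`. -/
def IndepOn {V : Type*} (G : SimpleGraph V) (A W : Set V) : Prop :=
  W ⊆ A ∧ ∀ u ∈ W, ∀ v ∈ W, ¬ G.Adj u v

/-- `W` is a maximal independent set of the induced subgraph of `G` on `A`. -/
def MaxIndepOn {V : Type*} (G : SimpleGraph V) (A W : Set V) : Prop :=
  IndepOn G A W ∧ ∀ W', IndepOn G A W' → W ⊆ W' → W' = W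

lemma exists_adj_of_maxIndep {V : Type*} (G : SimpleGraph V) (W : Set V)
    (hW : MaxIndepOn G Set.univ W) (v : V) (hv : v ∉ W) :
    ∃ w ∈ W, G.Adj v w := by
  by_contra h
  push_neg at h
  have hind : IndepOn G Set.univ (insert v W) := by
    refine ⟨Set.subset_univ _, ?_⟩
    rintro u (rfl | hu) w (rfl | hw)
    · exact fun hadj => G.loopless.irrefl _ hadj
    · exact h w hw
    · exact fun hadj => h u hu (G.symm.symm _ _ hadj)
    · exact hW.1.2 u hu w hw
  have heq := hW.2 _ hind (Set.subset_insert _ _)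
  exact hv (heq ▸ Set.mem_insert v W)

/-- In `G(m,n)`, if `W` is a maximal independent set containing `x_{i,j}`
with `(i,j) ≠ (m,n)`, then exactly one of `x_{i+1,j}`, `x_{i,j+1}` is also in `W`. -/
theorem stmt0 (m n : ℕ) (hm : 1 ≤ m) (hn : 1 ≤ n)
    (W : Set (Fin m × Fin n))
    (hW : MaxIndepOn (gridGraph m n) Set.univ W)
    (i : Fin m) (j : Fin n) (hmem : (i, j) ∈ W)
    (hne : ¬ (i.1 = m - 1 ∧ j.1 = n - 1)) :
    Xor' (∃ h : i.1 + 1 < m, ((⟨i.1 + 1, h⟩ : Fin m), j) ∈ W)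
         (∃ h : j.1 + 1 < n, (i, (⟨j.1 + 1, h⟩ : Fin n)) ∈ W) := by
  have hind := hW.1.2
  -- not both
  have hnb : ¬ ((∃ h : i.1 + 1 < m, ((⟨i.1 + 1, h⟩ : Fin m), j) ∈ W) ∧
      (∃ h : j.1 + 1 < n, (i, (⟨j.1 + 1, h⟩ : Fin n)) ∈ W)) := by
    rintro ⟨⟨h1, hm1⟩, ⟨h2, hm2⟩⟩
    exact hind _ hm1 _ hm2 (Or.inr ⟨by simp [Fin.lt_def], by simp [Fin.lt_def]⟩)
  -- at least one
  have hone : (∃ h : i.1 + 1 < m, ((⟨i.1 + 1, h⟩ : Fin m), j) ∈ W) ∨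
      (∃ h : j.1 + 1 < n, (i, (⟨j.1 + 1, h⟩ : Fin n)) ∈ W) := by
    by_contra hno
    push_neg at hno
    obtain ⟨hnoA, hnoB⟩ := hno
    have hcase : i.1 + 1 < m ∨ j.1 + 1 < n := by
      have := i.isLt; have := j.isLt; omega
    rcases hcase with hi | hj
    · -- (i+1, j) ∉ W, get w ∈ W adjacent to it
      obtain ⟨⟨a, b⟩, hwW, hadj⟩ :=
        exists_adj_of_maxIndep (gridGraph m n) W hW (⟨i.1 + 1, hi⟩, j) (hnoA hi)
      have hnadj := hind _ hmem _ hwW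
      rcases hadj with ⟨h1, h2⟩ | ⟨h1, h2⟩
      · exact hnadj (Or.inl ⟨by simp only [Fin.lt_def] at h1 ⊢; omega, h2⟩)
      · -- a ≤ i, j < b ; a = i
        rw [Fin.lt_def] at h1 h2
        simp only at h1 h2
        have hai : a.1 = i.1 := by
          by_contra hne'
          exact hnadj (Or.inr ⟨by simp only [Fin.lt_def]; omega, by simp only [Fin.lt_def]; omega⟩)
        have hjn : j.1 + 1 < n := by
          have hb := b.isLt
          rcases Nat.lt_or_ge (j.1 + 1) b.1 with h | h
          · omega
          · have hb1 : b.1 = j.1 + 1 := by omega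
            exfalso
            apply hnoB (by omega)
            have : ((a, b) : Fin m × Fin n) = (i, ⟨j.1 + 1, by omega⟩) := by
              ext <;> simp [hai, hb1]
            rwa [this] at hwW
        have hjb : j.1 + 1 < b.1 := by
          rcases Nat.lt_or_ge (j.1 + 1) b.1 with h | h
          · exact h
          · exfalso
            apply hnoB hjn
            have : ((a, b) : Fin m × Fin n) = (i, ⟨j.1 + 1, hjn⟩) := by
              ext <;> simp [hai]; omega
            rwa [this] at hwW
        -- now (i, j+1) has an adjacent vertex in W: contradiction
        obtain ⟨⟨c, d⟩, hw'W, hadj'⟩ :=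
          exists_adj_of_maxIndep (gridGraph m n) W hW (i, ⟨j.1 + 1, hjn⟩) (hnoB hjn)
        have hnadj' := hind _ hmem _ hw'W
        have hnadj'' := hind _ hwW _ hw'W
        rcases hadj' with ⟨h1', h2'⟩ | ⟨h1', h2'⟩
        · rw [Fin.lt_def] at h1' h2'
          simp only at h1' h2'
          have hdj : d.1 = j.1 := by
            by_contra hne'
            exact hnadj' (Or.inl ⟨by simp only [Fin.lt_def]; omega, by simp only [Fin.lt_def]; omega⟩)
          exact hnadj'' (Or.inl ⟨by simp only [Fin.lt_def]; omega, by simp only [Fin.lt_def]; omega⟩)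
        · rw [Fin.lt_def] at h1' h2'
          simp only at h1' h2'
          exact hnadj' (Or.inr ⟨by simp only [Fin.lt_def]; omega, by simp only [Fin.lt_def]; omega⟩)
    · -- symmetric case: (i, j+1) ∉ W
      obtain ⟨⟨c, d⟩, hwW, hadj⟩ :=
        exists_adj_of_maxIndep (gridGraph m n) W hW (i, ⟨j.1 + 1, hj⟩) (hnoB hj)
      have hnadj := hind _ hmem _ hwW
      rcases hadj with ⟨h1, h2⟩ | ⟨h1, h2⟩
      · -- i < c, d < j+1
        rw [Fin.lt_def] at h1 h2
        simp only at h1 h2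
        have hdj : d.1 = j.1 := by
          by_contra hne'
          exact hnadj (Or.inl ⟨by simp only [Fin.lt_def]; omega, by simp only [Fin.lt_def]; omega⟩)
        have him : i.1 + 1 < m := by
          have hc := c.isLt; omega
        have hic : i.1 + 1 < c.1 := by
          rcases Nat.lt_or_ge (i.1 + 1) c.1 with h | h
          · exact h
          · exfalso
            apply hnoA him
            have : ((c, d) : Fin m × Fin n) = (⟨i.1 + 1, him⟩, j) := by
              ext <;> simp [hdj]; omega
            rwa [this] at hwW
        obtain ⟨⟨a, b⟩, hw'W, hadj'⟩ :=
          exists_adj_of_maxIndep (gridGraph m n) W hW (⟨i.1 + 1, him⟩, j) (hnoA him)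
        have hnadj' := hind _ hmem _ hw'W
        have hnadj'' := hind _ hwW _ hw'W
        rcases hadj' with ⟨h1', h2'⟩ | ⟨h1', h2'⟩
        · rw [Fin.lt_def] at h1' h2'
          simp only at h1' h2'
          exact hnadj' (Or.inl ⟨by simp only [Fin.lt_def]; omega, by simp only [Fin.lt_def]; omega⟩)
        · rw [Fin.lt_def] at h1' h2'
          simp only at h1' h2'
          have hai : a.1 = i.1 := by
            by_contra hne'
            exact hnadj' (Or.inr ⟨by simp only [Fin.lt_def]; omega, by simp only [Fin.lt_def]; omega⟩)
          exact hnadj'' (Or.inr ⟨by simp only [Fin.lt_def]; omega, by simp only [Fin.lt_def]; omega⟩)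
      · rw [Fin.lt_def] at h1 h2
        simp only at h1 h2
        exact hnadj (Or.inr ⟨by simp only [Fin.lt_def]; omega, by simp only [Fin.lt_def]; omega⟩)
  rcases hone with hA | hB
  · exact Or.inl ⟨hA, fun hB => hnb ⟨hA, hB⟩⟩
  · exact Or.inr ⟨hB, fun hA => hnb ⟨hA, hB⟩⟩
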